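/- Let d ≥ 2 with d dividing r and r ≥ 2. Suppose A is a mixed orthogonal array MOA(r, N, d₁^{n₁}d₂^{n₂}⋯d_l^{n_l}, 2) and B is a difference scheme D(r, r, d). Let C = [A ⊕ 0_d, B ⊕ (d)] be the dr × (N + r) array whose row indexed by a pair (i, g) ∈ {1,…,r} × ℤ_d is the concatenation of row i of A with the vector (B(i,1)+g, …, B(i,r)+g). Then C is a mixed orthogonal array MOA(dr, N + r, d₁^{n₁}d₂^{n₂}⋯d_l^{n_l}d^r, 2), and MD(C) = min{r, MD(A) + r − r/d}. -/

import Mathlib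

open Finset

/-- The Hamming distance between two rows of an array: the number of columns
in which the rows differ. -/
def hamDist {ι κ : Type*} [Fintype κ] (A : ι → κ → ℕ) (i i' : ι) : ℕ :=
  (Finset.univ.filter fun j => A i j ≠ A i' j).card

/-- `MD(A)`: the minimum Hamming distance over all pairs of distinct rows. -/
noncomputable def minDist {ι κ : Type*} [Fintype κ] (A : ι → κ → ℕ) : ℕ :=
  sInf {n | ∃ i i', i ≠ i' ∧ hamDist A i i' = n}

/-- `A` is a mixed orthogonal array of strength `k` (rows indexed by `ι`,
columns by `κ`, column `j` taking values in `{0, …, lv j − 1}`): in the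
subarray given by any choice of at most `k` columns, every tuple of symbols
occurs equally often as a row, namely (number of rows)/(product of the levels
of the chosen columns) times. -/
def IsMOA {ι κ : Type*} [Fintype ι] [Fintype κ] [DecidableEq κ]
    (A : ι → κ → ℕ) (lv : κ → ℕ) (k : ℕ) : Prop :=
  (∀ i j, A i j < lv j) ∧
  ∀ S : Finset κ, S.card ≤ k → ∀ x : κ → ℕ, (∀ j ∈ S, x j < lv j) →
    (Finset.univ.filter fun i : ι => ∀ j ∈ S, A i j = x j).card * ∏ j ∈ S, lv j
      = Fintype.card ι

/-- An irredundant mixed orthogonal array of strength `k`: an MOA of strength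
`k` any two distinct rows of which have Hamming distance at least `k+1`. -/
def IsIrMOA {ι κ : Type*} [Fintype ι] [Fintype κ] [DecidableEq κ]
    (A : ι → κ → ℕ) (lv : κ → ℕ) (k : ℕ) : Prop :=
  IsMOA A lv k ∧ ∀ i i' : ι, i ≠ i' → k + 1 ≤ hamDist A i i'

/-- A difference scheme `D(r, c, d)`: an `r × c` matrix over `ℤ_d` such that
for any two distinct columns the `r` differences of corresponding entries
take each value of `ℤ_d` exactly `r/d` times. -/
def IsDiffScheme {r c d : ℕ} (B : Fin r → Fin c → ZMod d) : Prop :=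
  ∀ j j' : Fin c, j ≠ j' → ∀ g : ZMod d,
    (Finset.univ.filter fun i : Fin r => B i j - B i j' = g).card * d = r


section Helpers

lemma geomZero {d : ℕ} {ζ : ℂ} (h1 : ζ ≠ 1) (hd : ζ ^ d = 1) :
    ∑ m ∈ Finset.range d, ζ ^ m = 0 := by
  rw [geom_sum_eq h1, hd, sub_self, zero_div]

lemma powMod {d : ℕ} {ζ : ℂ} (hd : ζ ^ d = 1) (m : ℕ) : ζ ^ m = ζ ^ (m % d) := by
  conv_lhs => rw [← Nat.div_add_mod m d, pow_add, pow_mul, hd, one_pow, one_mul]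

lemma powValAdd {d : ℕ} [NeZero d] {ζ : ℂ} (hd : ζ ^ d = 1) (a b : ZMod d) :
    ζ ^ (a + b).val = ζ ^ a.val * ζ ^ b.val := by
  rw [← pow_add, powMod hd ((a+b).val), powMod hd (a.val + b.val), ZMod.val_add,
    Nat.mod_mod_of_dvd _ dvd_rfl]

lemma sumZmod {d : ℕ} [NeZero d] (ζ : ℂ) :
    ∑ g : ZMod d, ζ ^ (g.val) = ∑ m ∈ Finset.range d, ζ ^ m := by
  apply Finset.sum_nbij' (fun g : ZMod d => g.val) (fun m : ℕ => (m : ZMod d))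
  · intro a _; exact Finset.mem_range.mpr (ZMod.val_lt a)
  · intro a _; exact Finset.mem_univ _
  · intro a _; exact ZMod.natCast_rightInverse a
  · intro a ha; exact ZMod.val_cast_of_lt (Finset.mem_range.mp ha)
  · intro a _; rfl

lemma sumIteCard {α : Type*} [Fintype α] (P : α → Prop) [DecidablePred P] (m : ℕ) :
    ∑ a : α, (if P a then m else 0) = (univ.filter P).card * m := by
  rw [Finset.sum_ite, Finset.sum_const, Finset.sum_const, smul_eq_mul, smul_eq_mul,
    mul_zero, add_zero]

lemma cardFilterProd {α β : Type*} [Fintype α] [Fintype β] (R : α × β → Prop)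
    [DecidablePred R] :
    (univ.filter R).card = ∑ a : α, (univ.filter fun b => R (a, b)).card := by
  rw [Finset.card_filter, Fintype.sum_prod_type]
  simp only [Finset.card_filter]

lemma cardFilterConst {β : Type*} [Fintype β] (P : Prop) [Decidable P] :
    (univ.filter fun _ : β => P).card = if P then Fintype.card β else 0 := by
  split_ifs with h
  · simp [Finset.filter_true_of_mem (fun _ _ => h), Finset.card_univ]
  · simp [Finset.filter_false_of_mem (fun (_ : β) _ => h)]

lemma cardFilterSum {α β : Type*} [Fintype α] [Fintype β] (P : α ⊕ β → Prop)
    [DecidablePred P] :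
    (univ.filter P).card = (univ.filter fun a => P (Sum.inl a)).card
      + (univ.filter fun b => P (Sum.inr b)).card := by
  rw [Finset.card_filter, Fintype.sum_sum_type, ← Finset.card_filter, ← Finset.card_filter]

lemma valEqIff {d : ℕ} [NeZero d] {m : ℕ} (hm : m < d) (z : ZMod d) :
    z.val = m ↔ z = (m : ZMod d) := by
  constructor
  · intro h; apply ZMod.val_injective; rw [h, ZMod.val_cast_of_lt hm]
  · rintro rfl; exact ZMod.val_cast_of_lt hm

lemma cardGSingle {d : ℕ} [NeZero d] (u c : ZMod d) :
    (univ.filter fun g : ZMod d => u + g = c).card = 1 := by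
  have he : (univ.filter fun g : ZMod d => u + g = c) = {c - u} := by
    ext g
    simp only [Finset.mem_filter, Finset.mem_univ, true_and, Finset.mem_singleton]
    constructor
    · intro h; rw [← h]; ring
    · intro h; rw [h]; ring
  rw [he, Finset.card_singleton]

lemma cardGPair {d : ℕ} [NeZero d] (u u' c c' : ZMod d) :
    (univ.filter fun g : ZMod d => u + g = c ∧ u' + g = c').card
      = if u - u' = c - c' then 1 else 0 := by
  split_ifs with h
  · have he : (univ.filter fun g : ZMod d => u + g = c ∧ u' + g = c') = {c - u} := by
      ext g
      simp only [Finset.mem_filter, Finset.mem_univ, true_and, Finset.mem_singleton]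
      constructor
      · rintro ⟨h1, _⟩; rw [← h1]; ring
      · rintro rfl
        constructor
        · ring
        · linear_combination -h
    rw [he, Finset.card_singleton]
  · have he : (univ.filter fun g : ZMod d => u + g = c ∧ u' + g = c') = ∅ := by
      ext g
      simp only [Finset.mem_filter, Finset.mem_univ, true_and, Finset.notMem_empty,
        iff_false, not_and]
      intro h1 h2
      exact h (by linear_combination h1 - h2)
    rw [he, Finset.card_empty]

lemma cardGMixed {d : ℕ} [NeZero d] (P : Prop) [Decidable P] (u c : ZMod d) :
    (univ.filter fun g : ZMod d => P ∧ u + g = c).card = if P then 1 else 0 := by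
  split_ifs with h
  · rw [← cardGSingle u c]
    congr 1
    ext g; simp [h]
  · convert Finset.card_empty
    ext g; simp [h]

end Helpers

lemma diff_scheme_rows {r d : ℕ} [NeZero d] (hd : 2 ≤ d) (hr : r ≠ 0)
    {B : Fin r → Fin r → ZMod d} (hB : IsDiffScheme B)
    {i i' : Fin r} (hii : i ≠ i') (c : ZMod d) :
    (Finset.univ.filter fun j => B i j - B i' j = c).card * d = r := by
  have hd0 : (d : ℕ) ≠ 0 := NeZero.ne d
  set ω : ℂ := Complex.exp (2 * Real.pi * Complex.I / d) with hωdef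
  have hω : IsPrimitiveRoot ω d := Complex.isPrimitiveRoot_exp d hd0
  have hωd : ω ^ d = 1 := hω.pow_eq_one
  -- row orthogonality
  have hrow : ∀ k : ℕ, 0 < k → k < d → ∑ j, (ω ^ k) ^ (B i j - B i' j).val = 0 := by
    intro k hk1 hk2
    set ζ : ℂ := ω ^ k with hζdef
    have hζ1 : ζ ≠ 1 := hω.pow_ne_one_of_pos_of_lt hk1.ne' hk2
    have hζd : ζ ^ d = 1 := by rw [hζdef, ← pow_mul, mul_comm, pow_mul, hωd, one_pow]
    set M : Matrix (Fin r) (Fin r) ℂ := fun a b => ζ ^ (B a b).val with hM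
    set M' : Matrix (Fin r) (Fin r) ℂ := fun b a => ζ ^ (-B a b).val with hM'
    have hM'M : M' * M = (r : ℂ) • 1 := by
      ext j j'
      rw [Matrix.mul_apply]
      by_cases hjj : j = j'
      · subst hjj
        have : ∀ a : Fin r, M' j a * M a j = 1 := by
          intro a
          rw [hM, hM']
          simp only
          rw [← powValAdd hζd, neg_add_cancel, ZMod.val_zero, pow_zero]
        rw [Finset.sum_congr rfl fun a _ => this a]
        simp [Matrix.one_apply]
      · have step : ∀ a : Fin r, M' j a * M a j' = ζ ^ (B a j' - B a j).val := by
          intro a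
          rw [hM, hM']
          simp only
          rw [← powValAdd hζd, sub_eq_add_neg, add_comm]
        rw [Finset.sum_congr rfl fun a _ => step a]
        have hfib := Finset.sum_fiberwise (Finset.univ : Finset (Fin r))
          (fun a => B a j' - B a j) (fun a => ζ ^ (B a j' - B a j).val)
        rw [← hfib]
        have hcard : ∀ g : ZMod d,
            ∑ a ∈ Finset.univ.filter (fun a => B a j' - B a j = g), ζ ^ (B a j' - B a j).val
            = (r / d : ℕ) * ζ ^ g.val := by
          intro g
          rw [Finset.sum_congr rfl (fun a ha => by
            rw [(Finset.mem_filter.mp ha).2]), Finset.sum_const, nsmul_eq_mul]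
          congr 1
          have hcd := hB j' j (Ne.symm hjj) g
          have : (Finset.univ.filter fun a => B a j' - B a j = g).card = r / d :=
            (Nat.div_eq_of_eq_mul_left (Nat.pos_of_ne_zero hd0) hcd.symm).symm
          rw [this]
        rw [Finset.sum_congr rfl fun g _ => hcard g, ← Finset.mul_sum, sumZmod,
          geomZero hζ1 hζd, mul_zero]
        simp [Matrix.one_apply, hjj]
    have hrC : (r : ℂ) ≠ 0 := Nat.cast_ne_zero.mpr hr
    have h1 : ((r : ℂ)⁻¹ • M') * M = 1 := by
      rw [Matrix.smul_mul, hM'M, smul_smul, inv_mul_cancel₀ hrC, one_smul]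
    have h2 : M * ((r : ℂ)⁻¹ • M') = 1 := mul_eq_one_comm.mpr h1
    have hMM' : M * M' = (r : ℂ) • 1 := by
      calc M * M' = (r : ℂ) • (M * ((r : ℂ)⁻¹ • M')) := by
            rw [Matrix.mul_smul, smul_smul, mul_inv_cancel₀ hrC, one_smul]
        _ = (r : ℂ) • 1 := by rw [h2]
    have := congrFun (congrFun hMM' i) i'
    rw [Matrix.mul_apply] at this
    have hstep : ∀ j : Fin r, M i j * M' j i' = ζ ^ (B i j - B i' j).val := by
      intro j
      rw [hM, hM']
      simp only
      rw [← powValAdd hζd, ← sub_eq_add_neg]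
    rw [Finset.sum_congr rfl fun j _ => hstep j] at this
    rw [this]
    simp [Matrix.one_apply, hii, Matrix.smul_apply]
  -- Fourier inversion
  set v : Fin r → ZMod d := fun j => B i j - B i' j with hv
  have key : ∀ j : Fin r, (∑ k ∈ Finset.range d, (ω ^ (v j - c).val) ^ k)
      = if v j = c then (d : ℂ) else 0 := by
    intro j
    by_cases h : v j = c
    · simp [h, sub_self]
    · have hw : v j - c ≠ 0 := sub_ne_zero.mpr h
      have hwval : 0 < (v j - c).val := by
        rcases Nat.eq_zero_or_pos (v j - c).val with h0 | h0
        · exact absurd ((ZMod.val_eq_zero _).mp h0) hw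
        · exact h0
      have hne1 : ω ^ (v j - c).val ≠ 1 :=
        hω.pow_ne_one_of_pos_of_lt hwval.ne' (ZMod.val_lt _)
      have hpd : (ω ^ (v j - c).val) ^ d = 1 := by
        rw [← pow_mul, mul_comm, pow_mul, hωd, one_pow]
      rw [if_neg h]
      exact geomZero hne1 hpd
  have lhs_eq : ∑ j : Fin r, ∑ k ∈ Finset.range d,  (ω ^ (v j - c).val) ^ k
      = ((Finset.univ.filter fun j => v j = c).card * d : ℕ) := by
    rw [Finset.sum_congr rfl fun j _ => key j]
    rw [Finset.sum_ite, Finset.sum_const, Finset.sum_const]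
    push_cast
    ring
  have rhs_eq : ∑ j : Fin r, ∑ k ∈ Finset.range d, (ω ^ (v j - c).val) ^ k = (r : ℂ) := by
    rw [Finset.sum_comm]
    have inner : ∀ k ∈ Finset.range d, (∑ j : Fin r, (ω ^ (v j - c).val) ^ k)
        = if k = 0 then (r : ℂ) else 0 := by
      intro k hk
      by_cases hk0 : k = 0
      · simp [hk0]
      · rw [if_neg hk0]
        have hk1 : 0 < k := Nat.pos_of_ne_zero hk0
        have hζd : (ω ^ k) ^ d = 1 := by rw [← pow_mul, mul_comm, pow_mul, hωd, one_pow]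
        have : ∀ j : Fin r, (ω ^ (v j - c).val) ^ k = (ω ^ k) ^ (v j).val * (ω ^ k) ^ (-c).val := by
          intro j
          rw [← pow_mul, mul_comm ((v j - c).val) k, pow_mul, ← powValAdd hζd,
            ← sub_eq_add_neg]
        rw [Finset.sum_congr rfl fun j _ => this j, ← Finset.sum_mul,
          hrow k hk1 (Finset.mem_range.mp hk), zero_mul]
    rw [Finset.sum_congr rfl inner, Finset.sum_ite_eq' (Finset.range d) 0]
    simp [Nat.pos_of_ne_zero hd0]
  have : (((Finset.univ.filter fun j => v j = c).card * d : ℕ) : ℂ) = (r : ℂ) := by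
    rw [← lhs_eq, rhs_eq]
  exact_mod_cast this

theorem statement0 {r N d : ℕ} [NeZero d] {lv : Fin N → ℕ}
    (hd : 2 ≤ d) (hdr : d ∣ r) (hr : 2 ≤ r)
    (A : Fin r → Fin N → ℕ) (hA : IsMOA A lv 2)
    (B : Fin r → Fin r → ZMod d) (hB : IsDiffScheme B) :
    IsMOA
      (fun p : Fin r × ZMod d =>
        Sum.elim (fun j : Fin N => A p.1 j) (fun j : Fin r => (B p.1 j + p.2).val))
      (Sum.elim lv fun _ : Fin r => d) 2 ∧
    minDist
      (fun p : Fin r × ZMod d =>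
        Sum.elim (fun j : Fin N => A p.1 j) (fun j : Fin r => (B p.1 j + p.2).val))
      = min r (minDist A + r - r / d) := by
  have hd0 : d ≠ 0 := NeZero.ne d
  have hr0 : r ≠ 0 := by omega
  have hcard : Fintype.card (Fin r × ZMod d) = r * d := by
    rw [Fintype.card_prod, Fintype.card_fin, ZMod.card]
  have hrows : ∀ i i' : Fin r, i ≠ i' → ∀ c : ZMod d,
      (Finset.univ.filter fun j => B i j - B i' j = c).card = r / d := by
    intro i i' hii c
    exact (Nat.div_eq_of_eq_mul_left (Nat.pos_of_ne_zero hd0)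
      (diff_scheme_rows hd hr0 hB hii c).symm).symm
  constructor
  · constructor
    · rintro p (j | j)
      · exact hA.1 p.1 j
      · exact ZMod.val_lt _
    · intro S hS x hx
      rw [hcard]
      have hcases : S.card = 0 ∨ S.card = 1 ∨ S.card = 2 := by omega
      rcases hcases with h0 | h1 | h2
      · rw [Finset.card_eq_zero.mp h0]
        simp [Finset.card_univ, hcard]
      · obtain ⟨a, rfl⟩ := Finset.card_eq_one.mp h1
        simp only [Finset.mem_singleton, forall_eq, Finset.prod_singleton]
        cases a with
        | inl a =>
          simp only [Sum.elim_inl]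
          erw [cardFilterProd]
          have step : ∀ i : Fin r, (univ.filter fun _ : ZMod d => A i a = x (Sum.inl a)).card
              = if A i a = x (Sum.inl a) then d else 0 := by
            intro i; rw [cardFilterConst, ZMod.card]
          erw [Finset.sum_congr rfl fun i _ => step i, sumIteCard]
          have hAa := hA.2 {a} (by simp) (fun j => x (Sum.inl j)) (by
            intro j hj
            rw [Finset.mem_singleton] at hj
            subst hj
            exact hx (Sum.inl j) (Finset.mem_singleton_self _))
          simp only [Finset.mem_singleton, forall_eq, Finset.prod_singleton,
            Fintype.card_fin] at hAa
          rw [mul_right_comm, hAa]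
        | inr b =>
          simp only [Sum.elim_inr]
          erw [cardFilterProd]
          have hxb : x (Sum.inr b) < d := hx (Sum.inr b) (Finset.mem_singleton_self _)
          have step : ∀ i : Fin r,
              (univ.filter fun g : ZMod d => (B i b + g).val = x (Sum.inr b)).card = 1 := by
            intro i
            simp only [valEqIff hxb]
            exact cardGSingle _ _
          erw [Finset.sum_congr rfl fun i _ => step i]
          simp [Finset.card_univ]
      · obtain ⟨a, b, hab, rfl⟩ := Finset.card_eq_two.mp h2
        have hbmem : b ∈ ({a, b} : Finset (Fin N ⊕ Fin r)) :=
          Finset.mem_insert_of_mem (Finset.mem_singleton_self _)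
        have hamem : a ∈ ({a, b} : Finset (Fin N ⊕ Fin r)) := Finset.mem_insert_self _ _
        simp only [Finset.mem_insert, Finset.mem_singleton, forall_eq_or_imp, forall_eq,
          Finset.prod_insert (Finset.notMem_singleton.mpr hab), Finset.prod_singleton]
        cases a with
        | inl a =>
          cases b with
          | inl a' =>
            simp only [Sum.elim_inl]
            erw [cardFilterProd]
            have step : ∀ i : Fin r,
                (univ.filter fun _ : ZMod d =>
                  A i a = x (Sum.inl a) ∧ A i a' = x (Sum.inl a')).card
                = if A i a = x (Sum.inl a) ∧ A i a' = x (Sum.inl a') then d else 0 := by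
              intro i; rw [cardFilterConst, ZMod.card]
            erw [Finset.sum_congr rfl fun i _ => step i, sumIteCard]
            have haa' : a ≠ a' := fun h => hab (by rw [h])
            have hAa := hA.2 {a, a'} (by
                rw [Finset.card_insert_of_notMem (Finset.notMem_singleton.mpr haa'),
                  Finset.card_singleton]) (fun j => x (Sum.inl j)) (by
              intro j hj
              rcases Finset.mem_insert.mp hj with rfl | hj
              · exact hx (Sum.inl j) hamem
              · rw [Finset.mem_singleton] at hj
                subst hj
                exact hx (Sum.inl j) hbmem)
            simp only [Finset.mem_insert, Finset.mem_singleton, forall_eq_or_imp, forall_eq,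
              Finset.prod_insert (Finset.notMem_singleton.mpr haa'),
              Finset.prod_singleton, Fintype.card_fin] at hAa
            rw [mul_right_comm, hAa]
          | inr b =>
            simp only [Sum.elim_inl, Sum.elim_inr]
            erw [cardFilterProd]
            have hxb : x (Sum.inr b) < d := hx (Sum.inr b) hbmem
            have step : ∀ i : Fin r,
                (univ.filter fun g : ZMod d =>
                  A i a = x (Sum.inl a) ∧ (B i b + g).val = x (Sum.inr b)).card
                = if A i a = x (Sum.inl a) then 1 else 0 := by
              intro i
              simp only [valEqIff hxb]
              exact cardGMixed _ _ _
            erw [Finset.sum_congr rfl fun i _ => step i, sumIteCard]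
            have hAa := hA.2 {a} (by simp) (fun j => x (Sum.inl j)) (by
              intro j hj
              rw [Finset.mem_singleton] at hj
              subst hj
              exact hx (Sum.inl j) hamem)
            simp only [Finset.mem_singleton, forall_eq, Finset.prod_singleton,
              Fintype.card_fin] at hAa
            rw [mul_one, ← mul_assoc, hAa]
        | inr bb =>
          cases b with
          | inl a =>
            simp only [Sum.elim_inl, Sum.elim_inr]
            erw [cardFilterProd]
            have hxb : x (Sum.inr bb) < d := hx (Sum.inr bb) hamem
            have step : ∀ i : Fin r,
                (univ.filter fun g : ZMod d =>
                  (B i bb + g).val = x (Sum.inr bb) ∧ A i a = x (Sum.inl a)).card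
                = if A i a = x (Sum.inl a) then 1 else 0 := by
              intro i
              simp only [valEqIff hxb, and_comm]
              exact cardGMixed _ _ _
            erw [Finset.sum_congr rfl fun i _ => step i, sumIteCard]
            have hAa := hA.2 {a} (by simp) (fun j => x (Sum.inl j)) (by
              intro j hj
              rw [Finset.mem_singleton] at hj
              subst hj
              exact hx (Sum.inl j) hbmem)
            simp only [Finset.mem_singleton, forall_eq, Finset.prod_singleton,
              Fintype.card_fin] at hAa
            rw [mul_one, mul_comm (d : ℕ) (lv a), ← mul_assoc, hAa]
          | inr b' =>
            simp only [Sum.elim_inr]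
            erw [cardFilterProd]
            have hbb' : bb ≠ b' := fun h => hab (by rw [h])
            have hxb : x (Sum.inr bb) < d := hx (Sum.inr bb) hamem
            have hxb' : x (Sum.inr b') < d := hx (Sum.inr b') hbmem
            have step : ∀ i : Fin r,
                (univ.filter fun g : ZMod d =>
                  (B i bb + g).val = x (Sum.inr bb) ∧ (B i b' + g).val = x (Sum.inr b')).card
                = if B i bb - B i b' = (x (Sum.inr bb) : ZMod d) - (x (Sum.inr b') : ZMod d)
                  then 1 else 0 := by
              intro i
              simp only [valEqIff hxb, valEqIff hxb']
              exact cardGPair _ _ _ _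
            erw [Finset.sum_congr rfl fun i _ => step i, sumIteCard]
            have hBc := hB bb b' hbb' ((x (Sum.inr bb) : ZMod d) - (x (Sum.inr b') : ZMod d))
            rw [mul_one, ← mul_assoc, hBc]
  · have hdistSame : ∀ (i : Fin r) (g g' : ZMod d), g ≠ g' →
        hamDist (fun p : Fin r × ZMod d =>
          Sum.elim (fun j : Fin N => A p.1 j) (fun j : Fin r => (B p.1 j + p.2).val))
          (i, g) (i, g') = r := by
      intro i g g' hgg
      rw [hamDist, cardFilterSum]
      simp only [Sum.elim_inl, Sum.elim_inr]
      have h1 : (univ.filter fun j : Fin N => ¬ A i j = A i j) = ∅ :=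
        Finset.filter_false_of_mem (fun j _ h => h rfl)
      have h2 : (univ.filter fun j : Fin r => ¬ (B i j + g).val = (B i j + g').val)
          = univ := by
        apply Finset.filter_true_of_mem
        intro j _ h
        exact hgg (add_left_cancel (ZMod.val_injective d h))
      erw [h1, h2, Finset.card_empty, Finset.card_univ, Fintype.card_fin, zero_add]
    have hdistDiff : ∀ (i i' : Fin r), i ≠ i' → ∀ g g' : ZMod d,
        hamDist (fun p : Fin r × ZMod d =>
          Sum.elim (fun j : Fin N => A p.1 j) (fun j : Fin r => (B p.1 j + p.2).val))
          (i, g) (i', g') = hamDist A i i' + (r - r / d) := by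
      intro i i' hii g g'
      rw [hamDist, cardFilterSum]
      simp only [Sum.elim_inl, Sum.elim_inr]
      congr 1
      have hiff : ∀ j : Fin r, ((B i j + g).val = (B i' j + g').val)
          ↔ (B i j - B i' j = g' - g) := by
        intro j
        rw [(ZMod.val_injective d).eq_iff]
        constructor
        · intro h; linear_combination h
        · intro h; linear_combination h
      have hfe : (univ.filter fun j : Fin r => ¬ (B i j + g).val = (B i' j + g').val)
          = (univ.filter fun j : Fin r => ¬ B i j - B i' j = g' - g) :=
        Finset.filter_congr (fun j _ => not_congr (hiff j))
      have hadd := Finset.card_filter_add_card_filter_not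
        (s := (univ : Finset (Fin r))) (p := fun j : Fin r => B i j - B i' j = g' - g)
      have hc : (univ.filter fun j : Fin r => B i j - B i' j = g' - g).card = r / d :=
        hrows i i' hii _
      rw [Finset.card_univ, Fintype.card_fin] at hadd
      erw [hfe]
      omega
    have i0 : Fin r := ⟨0, by omega⟩
    have hTne : {n | ∃ i i' : Fin r, i ≠ i' ∧ hamDist A i i' = n}.Nonempty := by
      refine ⟨hamDist A ⟨0, by omega⟩ ⟨1, by omega⟩, ⟨0, by omega⟩, ⟨1, by omega⟩, ?_, rfl⟩
      exact Fin.ne_of_val_ne (by norm_num)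
    have hset : {n | ∃ p p' : Fin r × ZMod d, p ≠ p' ∧
        hamDist (fun p : Fin r × ZMod d => Sum.elim (fun j : Fin N => A p.1 j)
          (fun j : Fin r => (B p.1 j + p.2).val)) p p' = n}
        = {r} ∪ ((fun m => m + (r - r / d)) ''
            {n | ∃ i i' : Fin r, i ≠ i' ∧ hamDist A i i' = n}) := by
      ext n
      constructor
      · rintro ⟨⟨i, g⟩, ⟨i', g'⟩, hne, rfl⟩
        by_cases hii : i = i'
        · subst hii
          have hgg : g ≠ g' := fun h => hne (by rw [h])
          exact Or.inl (hdistSame i g g' hgg)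
        · exact Or.inr ⟨hamDist A i i', ⟨i, i', hii, rfl⟩, (hdistDiff i i' hii g g').symm⟩
      · haveI : Fact (1 < d) := ⟨hd⟩
        rintro (rfl | ⟨m, ⟨i, i', hii, rfl⟩, rfl⟩)
        · refine ⟨(⟨0, by omega⟩, 0), (⟨0, by omega⟩, 1), ?_, hdistSame _ 0 1 zero_ne_one⟩
          intro h
          exact zero_ne_one (congrArg Prod.snd h)
        · exact ⟨(i, 0), (i', 0), fun h => hii (congrArg Prod.fst h),
            hdistDiff i i' hii 0 0⟩
    have himg : sInf ((fun m => m + (r - r / d)) ''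
          {n | ∃ i i' : Fin r, i ≠ i' ∧ hamDist A i i' = n})
        = sInf {n | ∃ i i' : Fin r, i ≠ i' ∧ hamDist A i i' = n} + (r - r / d) := by
      apply le_antisymm
      · exact Nat.sInf_le ⟨_, Nat.sInf_mem hTne, rfl⟩
      · apply le_csInf (hTne.image _)
        rintro b ⟨m, hm, rfl⟩
        exact Nat.add_le_add_right (Nat.sInf_le hm) _
    have hdiv : r / d ≤ r := Nat.div_le_self r d
    unfold minDist
    rw [hset]
    have hu := csInf_union (s := ({r} : Set ℕ))
      (t := (fun m => m + (r - r / d)) '' {n | ∃ i i' : Fin r, i ≠ i' ∧ hamDist A i i' = n})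
      (OrderBot.bddBelow _) ⟨r, rfl⟩ (OrderBot.bddBelow _) (hTne.image _)
    rw [hu, csInf_singleton, himg]
    congr 1
    omega
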